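/- Let p ∈ (0, 1/2] and define H(x,y) = p·x·log_p(x) + (1-p)·y·log_p(y) + p·y - p·x and G(x,y) = (p·x + (1-p)·y)·log_p(p·x + (1-p)·y) for x, y ∈ [0,1], with the convention 0·log_p(0) = 0. Then for all y ≥ x ≥ 0 (with x, y ≤ 1), H(x,y) ≥ G(x,y). -/

import Mathlib

lemma psi_nonneg {p : ℝ} (hp : 0 < p) (hp2 : p ≤ 1/2) :
    0 ≤ (1 - p) * Real.log (1 - p) - p * Real.log p := by
  have hq : 0 < 1 - p := by linarith
  have h1 : -(p / (1 - p)) ≤ Real.log (1 - p) := by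
    have h := Real.log_le_sub_one_of_pos (show (0:ℝ) < (1 - p)⁻¹ by positivity)
    rw [Real.log_inv] at h
    have e : (1 - p)⁻¹ - 1 = p / (1 - p) := by field_simp; ring
    linarith
  have h2 : (1 - 2*p) / (1 - p) ≤ Real.log ((1 - p) / p) := by
    have h := Real.log_le_sub_one_of_pos (show (0:ℝ) < p / (1 - p) by positivity)
    rw [Real.log_div hp.ne' hq.ne'] at h
    have e : Real.log ((1 - p) / p) = Real.log (1 - p) - Real.log p :=
      Real.log_div hq.ne' hp.ne'
    rw [e]
    have : p / (1 - p) - 1 = -((1 - 2*p) / (1 - p)) := by field_simp; ring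
    linarith
  have hlp : Real.log p = Real.log (1 - p) - Real.log ((1 - p) / p) := by
    rw [Real.log_div hq.ne' hp.ne']; ring
  have h12 : 0 ≤ 1 - 2*p := by linarith
  have hA : (1 - 2*p) * (-(p / (1 - p))) ≤ (1 - 2*p) * Real.log (1 - p) :=
    mul_le_mul_of_nonneg_left h1 h12
  have hB : p * ((1 - 2*p) / (1 - p)) ≤ p * Real.log ((1 - p) / p) :=
    mul_le_mul_of_nonneg_left h2 hp.le
  have hz : (1 - 2*p) * (-(p / (1 - p))) + p * ((1 - 2*p) / (1 - p)) = 0 := by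
    field_simp; ring
  have expand : (1 - p) * Real.log (1 - p) - p * Real.log p
      = (1 - 2*p) * Real.log (1 - p) + p * Real.log ((1 - p) / p) := by
    rw [hlp]; ring
  linarith

lemma key_F_nonneg {p y : ℝ} (hp : 0 < p) (hp2 : p ≤ 1/2) (hy : 0 < y)
    (x : ℝ) (hx : 0 ≤ x) (hxy : x ≤ y) :
    0 ≤ (p*x + (1-p)*y) * Real.log (p*x + (1-p)*y) - p*(x*Real.log x)
      - (1-p)*y*Real.log y - p*(y-x)*Real.log p := by
  have hq : 0 < 1 - p := by linarith
  set c : ℝ := (1-p)*y with hc_def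
  have hc : 0 < c := by positivity
  set F : ℝ → ℝ := fun z => (p*z + c) * Real.log (p*z + c) - p*(z*Real.log z)
      - c*Real.log y - p*(y-z)*Real.log p with hF_def
  -- continuity
  have hcont : Continuous F := by
    apply Continuous.sub
    apply Continuous.sub
    apply Continuous.sub
    · exact Real.continuous_mul_log.comp (by continuity)
    · exact continuous_const.mul Real.continuous_mul_log
    · exact continuous_const
    · continuity
  -- derivative on the interior
  have hderiv : ∀ z ∈ Set.Ioo (0:ℝ) y,
      HasDerivAt F (p * Real.log (p*z + c) - p * Real.log z + p * Real.log p) z := by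
    intro z hz
    have hz0 : 0 < z := hz.1
    have hpc : 0 < p*z + c := by positivity
    have ha : HasDerivAt (fun w : ℝ => p*w + c) p z := by
      simpa using ((hasDerivAt_id z).const_mul p).add_const c
    have h1 : HasDerivAt (fun w : ℝ => (p*w + c) * Real.log (p*w + c))
        ((Real.log (p*z + c) + 1) * p) z :=
      by have := (Real.hasDerivAt_mul_log hpc.ne').comp z ha; exact this
    have h2 : HasDerivAt (fun w : ℝ => p*(w*Real.log w)) (p * (Real.log z + 1)) z :=
      (Real.hasDerivAt_mul_log hz0.ne').const_mul p
    have h4 : HasDerivAt (fun w : ℝ => p*(y-w)*Real.log p) ((p * -1) * Real.log p) z := by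
      exact (((hasDerivAt_id z).const_sub y).const_mul p).mul_const (Real.log p)
    have := ((h1.sub h2).sub_const (c*Real.log y)).sub h4
    exact this.congr_deriv (by ring)
  have hdiff : DifferentiableOn ℝ F (interior (Set.Icc (0:ℝ) y)) := by
    rw [interior_Icc]
    exact fun z hz => (hderiv z hz).differentiableAt.differentiableWithinAt
  have hanti : AntitoneOn (deriv F) (interior (Set.Icc (0:ℝ) y)) := by
    rw [interior_Icc]
    intro a ha b hb hab
    rw [(hderiv a ha).deriv, (hderiv b hb).deriv]
    have ha0 : 0 < a := ha.1
    have hb0 : 0 < b := hb.1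
    have hpa : 0 < p*a + c := by positivity
    have hpb : 0 < p*b + c := by positivity
    have key : Real.log (p*b + c) - Real.log b ≤ Real.log (p*a + c) - Real.log a := by
      rw [← Real.log_div hpb.ne' hb0.ne', ← Real.log_div hpa.ne' ha0.ne']
      apply Real.log_le_log (by positivity)
      rw [div_le_div_iff₀ hb0 ha0]
      nlinarith [hc.le]
    nlinarith [hp.le]
  have hconc : ConcaveOn ℝ (Set.Icc (0:ℝ) y) F :=
    hanti.concaveOn_of_deriv (convex_Icc 0 y) hcont.continuousOn hdiff
  -- endpoints
  have hF0 : 0 ≤ F 0 := by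
    have hlogc : Real.log c = Real.log (1-p) + Real.log y := by
      rw [hc_def, Real.log_mul hq.ne' hy.ne']
    have : F 0 = y * ((1-p) * Real.log (1-p) - p * Real.log p) := by
      simp only [hF_def]
      rw [mul_zero, zero_add, hlogc, Real.log_zero]
      ring
    rw [this]
    exact mul_nonneg hy.le (psi_nonneg hp hp2)
  have hFy : F y = 0 := by
    have hm : p*y + c = y := by rw [hc_def]; ring
    simp only [hF_def, hm]
    ring
  -- convex combination
  have hmem0 : (0:ℝ) ∈ Set.Icc (0:ℝ) y := ⟨le_refl 0, hy.le⟩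
  have hmemy : y ∈ Set.Icc (0:ℝ) y := ⟨hy.le, le_refl y⟩
  have hb : 0 ≤ x / y := by positivity
  have ha : 0 ≤ (y - x) / y := by
    apply div_nonneg (by linarith) hy.le
  have hab : (y - x) / y + x / y = 1 := by field_simp; ring
  have := hconc.2 hmem0 hmemy ha hb hab
  simp only [smul_eq_mul] at this
  have hcomb : (y - x) / y * 0 + x / y * y = x := by field_simp; ring
  rw [hcomb] at this
  have hFx : 0 ≤ F x := by
    rw [hFy, mul_zero, add_zero] at this
    have h0 : 0 ≤ (y - x) / y * F 0 := mul_nonneg ha hF0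
    exact h0.trans this
  simpa [hF_def, hc_def] using hFx

theorem H_ge_G (p : ℝ) (hp : 0 < p) (hp2 : p ≤ 1/2)
    (H G : ℝ → ℝ → ℝ)
    (hH : ∀ x y, H x y = p * x * (Real.log x / Real.log p)
      + (1 - p) * y * (Real.log y / Real.log p) + p * y - p * x)
    (hG : ∀ x y, G x y = (p * x + (1 - p) * y) *
      (Real.log (p * x + (1 - p) * y) / Real.log p))
    (x y : ℝ) (hx : 0 ≤ x) (hxy : x ≤ y) (hy1 : y ≤ 1) :
    H x y ≥ G x y := by
  rcases eq_or_lt_of_le (hx.trans hxy) with hy0 | hy0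
  · -- y = 0, hence x = 0
    have hx0 : x = 0 := le_antisymm (hy0 ▸ hxy) hx
    rw [hH, hG, hx0, ← hy0]
    simp
  · have hL : Real.log p < 0 := Real.log_neg hp (by linarith)
    have hkey := key_F_nonneg hp hp2 hy0 x hx hxy
    rw [ge_iff_le, ← sub_nonneg, hH, hG]
    have heq : p * x * (Real.log x / Real.log p)
        + (1 - p) * y * (Real.log y / Real.log p) + p * y - p * x
        - (p * x + (1 - p) * y) * (Real.log (p * x + (1 - p) * y) / Real.log p)
        = -((p*x + (1-p)*y) * Real.log (p*x + (1-p)*y) - p*(x*Real.log x)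
          - (1-p)*y*Real.log y - p*(y-x)*Real.log p) / Real.log p := by
      field_simp [hL.ne]
      ring
    rw [heq, div_nonneg_iff]
    right
    exact ⟨by linarith, hL.le⟩
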